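/- If A_h is self-adjoint negative semidefinite on a finite-dimensional Hilbert space and ρ ∈ [0,2], then for all y ∈ D((λ−A_h)^{ρ/2}) and m ≥ 0 one has ‖e^{A_h t_m} y − (I − Δt A_h)^{−m} y‖ ≤ c Δt^{ρ/2} ‖(λ−A_h)^{ρ/2} y‖ with a constant c independent of Δt, m, y, where t_m = mΔt. -/

import Mathlib

private lemma euler_ind_bound (x : ℝ) (hx : 0 ≤ x) (m : ℕ) :
    ((1+x)⁻¹)^m - (Real.exp (-x))^m ≤ m * x^2 * (1+x) * ((1+x)⁻¹)^m := by
  have h1 : (0:ℝ) < 1 + x := by linarith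
  have hv : (0:ℝ) < (1+x)⁻¹ := inv_pos.mpr h1
  have hu0 : (0:ℝ) < Real.exp (-x) := Real.exp_pos _
  have huv : Real.exp (-x) ≤ (1+x)⁻¹ := by
    rw [Real.exp_neg]
    exact inv_anti₀ h1 (by linarith [Real.add_one_le_exp x])
  have hvu2 : (1+x)⁻¹ - Real.exp (-x) ≤ x^2 := by
    have h2 : (1+x)⁻¹ ≤ 1 - x + x^2 := by
      rw [inv_le_iff_one_le_mul₀ h1]
      nlinarith
    have h3 : 1 - x ≤ Real.exp (-x) := by linarith [Real.add_one_le_exp (-x)]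
    linarith
  induction m with
  | zero => simp
  | succ n ih =>
    have hvinv : (1+x) * (1+x)⁻¹ = 1 := mul_inv_cancel₀ h1.ne'
    have e1 : ((1+x)⁻¹)^(n+1) - (Real.exp (-x))^(n+1)
        = (1+x)⁻¹ * (((1+x)⁻¹)^n - (Real.exp (-x))^n)
          + (Real.exp (-x))^n * ((1+x)⁻¹ - Real.exp (-x)) := by ring
    have b1 : (1+x)⁻¹ * (((1+x)⁻¹)^n - (Real.exp (-x))^n)
        ≤ (1+x)⁻¹ * (n * x^2 * (1+x) * ((1+x)⁻¹)^n) :=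
      mul_le_mul_of_nonneg_left ih hv.le
    have b2 : (Real.exp (-x))^n * ((1+x)⁻¹ - Real.exp (-x)) ≤ ((1+x)⁻¹)^n * x^2 := by
      have hun : (Real.exp (-x))^n ≤ ((1+x)⁻¹)^n := pow_le_pow_left₀ hu0.le huv n
      have := pow_nonneg hu0.le n
      nlinarith [sq_nonneg x]
    have e2 : ((1+x)⁻¹)^n = (1+x) * ((1+x)⁻¹)^(n+1) := by
      rw [pow_succ, mul_comm (((1+x)⁻¹)^n), ← mul_assoc, hvinv, one_mul]
    rw [e1]
    calc (1+x)⁻¹ * (((1+x)⁻¹)^n - (Real.exp (-x))^n)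
          + (Real.exp (-x))^n * ((1+x)⁻¹ - Real.exp (-x))
        ≤ (1+x)⁻¹ * (n * x^2 * (1+x) * ((1+x)⁻¹)^n) + ((1+x)⁻¹)^n * x^2 := by linarith
      _ = (n+1) * x^2 * (1+x) * ((1+x)⁻¹)^(n+1) := by
          rw [e2]; field_simp
      _ = (↑(n+1)) * x^2 * (1+x) * ((1+x)⁻¹)^(n+1) := by push_cast; ring

private lemma euler_L1 (x : ℝ) (hx : 0 ≤ x) (m : ℕ) :
    ((1+x)⁻¹)^m - (Real.exp (-x))^m ≤ 1 := by
  have h1 : (0:ℝ) < 1 + x := by linarith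
  have hv1 : ((1+x)⁻¹ : ℝ) ≤ 1 := by
    rw [inv_le_one_iff₀]; right; linarith
  have := pow_le_one₀ (inv_pos.mpr h1).le hv1 (n := m)
  have := pow_nonneg (Real.exp_pos (-x)).le m
  linarith

private lemma euler_L2 (x : ℝ) (hx : 0 ≤ x) (hx2 : x ≤ 2) (m : ℕ) :
    ((1+x)⁻¹)^m - (Real.exp (-x))^m ≤ 2 * x := by
  refine (euler_ind_bound x hx m).trans ?_
  have h1 : (0:ℝ) < 1 + x := by linarith
  rcases eq_or_lt_of_le hx with h0 | hxpos
  · simp [← h0]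
  rcases m with _ | n
  · simp; positivity
  -- goal : (↑(n+1)) * x^2 * (1+x) * ((1+x)⁻¹)^(n+1) ≤ 2 * x
  have hbern : 1 + (n:ℝ) * x ≤ (1+x)^n := by
    have := one_add_mul_le_pow (a := x) (by linarith) n
    linarith
  have hkey : (↑(n+1):ℝ) * x * (1+x) ≤ 2 * (1+x)^(n+1) := by
    have h2 : ((n:ℝ)+1) * x ≤ 2 * (1+x)^n := by nlinarith
    have : ((n:ℝ)+1) * x * (1+x) ≤ 2 * (1+x)^n * (1+x) :=
      mul_le_mul_of_nonneg_right h2 h1.le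
    calc (↑(n+1):ℝ) * x * (1+x) = ((n:ℝ)+1) * x * (1+x) := by push_cast; ring
      _ ≤ 2 * (1+x)^n * (1+x) := this
      _ = 2 * (1+x)^(n+1) := by ring
  have hpowpos : (0:ℝ) < (1+x)^(n+1) := pow_pos h1 _
  rw [inv_pow, mul_inv_le_iff₀ hpowpos]
  nlinarith

/-- Implicit Euler error with spatial regularity (spectral form):
for a self-adjoint negative semidefinite `A_h`, with eigenvalue `μ ≤ 0` and `lam > 0`,
`|e^{μ t_m} - (1 - Δt μ)^{-m}| ≤ c Δt^{ρ/2} (lam - μ)^{ρ/2}` for all `ρ ∈ [0,2]`,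
`Δt > 0` and `m ≥ 0`, where `t_m = m Δt` and `c` is independent of `Δt`, `m`, `μ`. -/
theorem implicit_euler_error_spectral
    (lam : ℝ) (hlam : 0 < lam) :
    ∃ c : ℝ, 0 < c ∧ ∀ μ : ℝ, μ ≤ 0 → ∀ ρ ∈ Set.Icc (0:ℝ) 2, ∀ Δt : ℝ, 0 < Δt →
      ∀ m : ℕ,
        |Real.exp (μ * (m * Δt)) - ((1 - Δt * μ) ^ m)⁻¹|
          ≤ c * Δt ^ (ρ / 2) * (lam - μ) ^ (ρ / 2) := by
  refine ⟨2, by norm_num, ?_⟩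
  intro μ hμ ρ hρ Δt hΔt m
  obtain ⟨hρ0, hρ2⟩ := hρ
  set x : ℝ := Δt * (-μ) with hxdef
  have hx : 0 ≤ x := mul_nonneg hΔt.le (by linarith)
  have h1 : (0:ℝ) < 1 + x := by linarith
  set s : ℝ := ρ / 2 with hsdef
  have hs0 : 0 ≤ s := by positivity
  have hs1 : s ≤ 1 := by rw [hsdef]; linarith
  set y : ℝ := Δt * (lam - μ) with hydef
  have hy : 0 < y := mul_pos hΔt (by linarith)
  have hxy : x ≤ y := by
    rw [hxdef, hydef]
    have : (-μ) ≤ lam - μ := by linarith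
    exact mul_le_mul_of_nonneg_left this hΔt.le
  -- rewrite the LHS
  have hexp : Real.exp (μ * (m * Δt)) = (Real.exp (-x))^m := by
    rw [← Real.exp_nat_mul]
    congr 1
    rw [hxdef]; ring
  have hinv : ((1 - Δt * μ) ^ m)⁻¹ = ((1+x)⁻¹)^m := by
    rw [← inv_pow]
    congr 2
    rw [hxdef]; ring
  have huv : Real.exp (-x) ≤ (1+x)⁻¹ := by
    rw [Real.exp_neg]
    exact inv_anti₀ h1 (by linarith [Real.add_one_le_exp x])
  have hnn : 0 ≤ ((1+x)⁻¹)^m - (Real.exp (-x))^m :=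
    sub_nonneg.mpr (pow_le_pow_left₀ (Real.exp_pos _).le huv m)
  have habs : |Real.exp (μ * (m * Δt)) - ((1 - Δt * μ) ^ m)⁻¹|
      = ((1+x)⁻¹)^m - (Real.exp (-x))^m := by
    rw [hexp, hinv, abs_sub_comm, abs_of_nonneg hnn]
  rw [habs]
  have hbound : ((1+x)⁻¹)^m - (Real.exp (-x))^m ≤ 2 * min 1 y := by
    rcases le_or_gt y 1 with hy1 | hy1
    · have hx2 : x ≤ 2 := by linarith
      have := euler_L2 x hx hx2 m
      have hmin : min 1 y = y := min_eq_right hy1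
      rw [hmin]; linarith
    · have := euler_L1 x hx m
      have hmin : min 1 y = 1 := min_eq_left hy1.le
      rw [hmin]; linarith
  refine hbound.trans ?_
  have hys : min 1 y ≤ y ^ s := by
    rcases le_or_gt 1 y with h | h
    · calc min 1 y ≤ 1 := min_le_left _ _
        _ ≤ y ^ s := Real.one_le_rpow h hs0
    · have : y ^ (1:ℝ) ≤ y ^ s := Real.rpow_le_rpow_of_exponent_ge hy h.le hs1
      rw [Real.rpow_one] at this
      calc min 1 y ≤ y := min_le_right _ _
        _ ≤ y ^ s := this
  have hmul : y ^ s = Δt ^ s * (lam - μ) ^ s := by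
    rw [hydef, Real.mul_rpow hΔt.le (by linarith)]
  calc 2 * min 1 y ≤ 2 * y ^ s := by linarith
    _ = 2 * Δt ^ s * (lam - μ) ^ s := by rw [hmul]; ring
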